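/- Let p > 2, p′ = p/(p−1) and a > 0, and take b = 1. Then the Legendre transform h of f(s,t) = (a/p)(|s|^{p/2} + |t|^{p/2})² is given explicitly by h(s̄, t̄) = (a^{1−p′}/p′) ( |s̄|^{p/(p−2)} + |t̄|^{p/(p−2)} )^{(p−2)/(p−1)} for all real s̄, t̄. -/

import Mathlib

private lemma sq_split (x p : ℝ) (hp : 0 < p) : |x| ^ p = |x| ^ (p/2) * |x| ^ (p/2) := by
  rw [← Real.rpow_add' (abs_nonneg x) (by positivity : p/2 + p/2 ≠ 0)]
  norm_num

private lemma conj_half (p : ℝ) (hp : 2 < p) : (p/2).HolderConjugate (p/(p-2)) := by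
  rw [Real.holderConjugate_iff]
  constructor
  · linarith
  · have h1 : p ≠ 0 := by positivity
    have h2 : p - 2 ≠ 0 := by intro h; rw [sub_eq_zero] at h; linarith
    field_simp
    ring

private lemma upper (p a sb tb lam : ℝ) (hp : 2 < p) (ha : 0 < a) (hlam : 0 < lam)
    (s t : ℝ) :
    s * sb + t * tb - (a/p) * (|s|^p + 2*|s|^(p/2)*|t|^(p/2) + |t|^p)
      ≤ lam^p/(a*p) + (|sb|^(p/(p-2)) + |tb|^(p/(p-2)))/(lam^(p/(p-2)) * (p/(p-2))) := by
  have hp0 : (0:ℝ) < p := by linarith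
  have hp2 : (0:ℝ) < p - 2 := by linarith
  have hconj := conj_half p hp
  have habs : ∀ x y : ℝ, x * y ≤ |x| * |y| := fun x y =>
    (le_abs_self _).trans (le_of_eq (abs_mul x y))
  have hyoung : ∀ x y : ℝ, |x| * |y| ≤
      lam^(p/2) * |x|^(p/2) / (p/2) + |y|^(p/(p-2)) / lam^(p/(p-2)) / (p/(p-2)) := by
    intro x y
    have h := Real.young_inequality_of_nonneg
      (mul_nonneg hlam.le (abs_nonneg x)) (div_nonneg (abs_nonneg y) hlam.le) hconj
    rw [Real.mul_rpow hlam.le (abs_nonneg x), Real.div_rpow (abs_nonneg y) hlam.le] at h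
    calc |x| * |y| = (lam * |x|) * (|y| / lam) := by field_simp
      _ ≤ _ := h
  have h1 := (habs s sb).trans (hyoung s sb)
  have h2 := (habs t tb).trans (hyoung t tb)
  have hbig : |s|^p + 2*|s|^(p/2)*|t|^(p/2) + |t|^p
      = (|s|^(p/2) + |t|^(p/2))^2 := by
    rw [sq_split s p hp0, sq_split t p hp0]; ring
  rw [hbig]
  have hL : lam^(p/2) * lam^(p/2) = lam^p := by
    rw [← Real.rpow_add hlam]; norm_num
  have hquad : lam^(p/2) * (|s|^(p/2) + |t|^(p/2)) / (p/2)
      - (a/p) * (|s|^(p/2) + |t|^(p/2))^2 ≤ lam^p/(a*p) := by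
    set L := lam^(p/2) with hLdef
    set R := |s|^(p/2) + |t|^(p/2) with hRdef
    have hkey : (2*L*R - a*R^2) * a ≤ L * L := by nlinarith [sq_nonneg (L - a*R)]
    calc L * R / (p/2) - (a/p) * R^2 = ((2*L*R - a*R^2) * a)/(a*p) := by
          field_simp
      _ ≤ (L*L)/(a*p) := by
          apply (div_le_div_iff_of_pos_right (by positivity)).mpr hkey
      _ = lam^p/(a*p) := by rw [hL]
  have hterm : s * sb + t * tb ≤ lam^(p/2) * (|s|^(p/2) + |t|^(p/2)) / (p/2)
      + (|sb|^(p/(p-2)) + |tb|^(p/(p-2)))/(lam^(p/(p-2)) * (p/(p-2))) := by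
    have e1 : lam^(p/2) * (|s|^(p/2) + |t|^(p/2)) / (p/2)
        = lam^(p/2) * |s|^(p/2) / (p/2) + lam^(p/2) * |t|^(p/2) / (p/2) := by ring
    have e2 : (|sb|^(p/(p-2)) + |tb|^(p/(p-2)))/(lam^(p/(p-2)) * (p/(p-2)))
        = |sb|^(p/(p-2)) / lam^(p/(p-2)) / (p/(p-2))
          + |tb|^(p/(p-2)) / lam^(p/(p-2)) / (p/(p-2)) := by
      field_simp
    rw [e1, e2]; linarith
  linarith

private lemma key1 (p p' a S : ℝ) (hp : 2 < p) (hp' : p' = p/(p-1)) (ha : 0 < a)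
    (hS : 0 < S) :
    ((a*S)^((p-2)/(p*(p-1))))^p/(a*p)
      + S/(((a*S)^((p-2)/(p*(p-1))))^(p/(p-2)) * (p/(p-2)))
    = a^(1-p')/p' * S^((p-2)/(p-1)) := by
  have hp0 : (0:ℝ) < p := by linarith
  have hp1 : (0:ℝ) < p - 1 := by linarith
  have hp2 : (0:ℝ) < p - 2 := by linarith
  have hp0' : p ≠ 0 := hp0.ne'
  have hp1' : p - 1 ≠ 0 := hp1.ne'
  have hp2' : p - 2 ≠ 0 := hp2.ne'
  have haS : (0:ℝ) < a * S := mul_pos ha hS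
  have hlamp : ((a*S)^((p-2)/(p*(p-1))))^p = (a*S)^((p-2)/(p-1)) := by
    rw [← Real.rpow_mul haS.le]; congr 1; field_simp
  have hlamqs : ((a*S)^((p-2)/(p*(p-1))))^(p/(p-2)) = (a*S)^(1/(p-1)) := by
    rw [← Real.rpow_mul haS.le]; congr 1; field_simp
  have hae : a^((p-2)/(p-1)) = a * a^(1 - p/(p-1)) := by
    rw [show (p-2)/(p-1) = (1:ℝ) + (1 - p/(p-1)) by field_simp; ring,
      Real.rpow_add ha, Real.rpow_one]
  have r2 : a^(1 - p/(p-1)) * a^(1/(p-1)) = 1 := by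
    rw [← Real.rpow_add ha, show (1 - p/(p-1)) + 1/(p-1) = 0 by field_simp; ring,
      Real.rpow_zero]
  have r3 : S^(1/(p-1)) * S^((p-2)/(p-1)) = S := by
    rw [← Real.rpow_add hS, show 1/(p-1) + (p-2)/(p-1) = 1 by field_simp; ring,
      Real.rpow_one]
  rw [hp', hlamp, hlamqs, Real.mul_rpow ha.le hS.le, Real.mul_rpow ha.le hS.le, hae]
  have hy : (0:ℝ) < a^(1/(p-1)) := Real.rpow_pos_of_pos ha _
  have hv : (0:ℝ) < S^(1/(p-1)) := Real.rpow_pos_of_pos hS _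
  set u := S^((p-2)/(p-1)) with hu
  set v := S^(1/(p-1)) with hv'
  set y := a^(1/(p-1)) with hy'
  set x := a^(1 - p/(p-1)) with hx'
  -- r2 : x * y = 1, r3 : v * u = S
  have hxy : x = y⁻¹ := eq_inv_of_mul_eq_one_left r2
  rw [← r3, hxy]
  field_simp
  ring

private lemma key2 (p p' a S : ℝ) (hp : 2 < p) (hp' : p' = p/(p-1)) (ha : 0 < a)
    (hS : 0 < S) :
    (a*S)^(-(1/(p-1))) * S
      - (a/p) * (((a*S)^(-(1/(p-1))))^(p/2) * ((a*S)^(-(1/(p-1))))^(p/2)) * S^2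
    = a^(1-p')/p' * S^((p-2)/(p-1)) := by
  have hp0 : (0:ℝ) < p := by linarith
  have hp1 : (0:ℝ) < p - 1 := by linarith
  have hp0' : p ≠ 0 := hp0.ne'
  have hp1' : p - 1 ≠ 0 := hp1.ne'
  have haS : (0:ℝ) < a * S := mul_pos ha hS
  have hX : (0:ℝ) < (a*S)^(-(1/(p-1))) := Real.rpow_pos_of_pos haS _
  have hcc : ((a*S)^(-(1/(p-1))))^(p/2) * ((a*S)^(-(1/(p-1))))^(p/2)
      = (a*S)^(-(p/(p-1))) := by
    rw [← Real.rpow_add hX, ← Real.rpow_mul haS.le]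
    congr 1
    field_simp
    norm_num
  rw [hcc, show -(1/(p-1)) = 1 - p/(p-1) by field_simp; ring,
    Real.mul_rpow ha.le hS.le, Real.mul_rpow ha.le hS.le, hp']
  have rA : S^(1 - p/(p-1)) * S = S^((p-2)/(p-1)) := by
    nth_rewrite 2 [← Real.rpow_one S]
    rw [← Real.rpow_add hS]
    congr 1
    field_simp
    ring
  have rB : S^(-(p/(p-1))) * S^2 = S^((p-2)/(p-1)) := by
    rw [show (S^2 : ℝ) = S^((2:ℕ):ℝ) by rw [Real.rpow_natCast], ← Real.rpow_add hS]
    congr 1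
    push_cast
    field_simp
    ring
  have rC : a * a^(-(p/(p-1))) = a^(1 - p/(p-1)) := by
    nth_rewrite 1 [← Real.rpow_one a]
    rw [← Real.rpow_add ha]
    congr 1
  set u := S^((p-2)/(p-1)) with hu
  set x := a^(1 - p/(p-1)) with hx'
  set w := a^(-(p/(p-1))) with hw'
  set X1 := S^(1 - p/(p-1)) with hX1'
  set X2 := S^(-(p/(p-1))) with hX2'
  calc x * X1 * S - a/p * (w * X2) * S^2
      = x * (X1 * S) - (a * w) * (X2 * S^2) / p := by ring
    _ = x * u - x * u / p := by rw [rA, rB, rC]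
    _ = x/(p/(p-1)) * u := by field_simp
private lemma coord_mul (p : ℝ) (hp : 2 < p) (c x : ℝ) :
    (c * |x| ^ ((4-p)/(p-2)) * x) * x = c * |x| ^ (p/(p-2)) := by
  have h2 : (0:ℝ) < p - 2 := by linarith
  have he : (4-p)/(p-2) + 2 = p/(p-2) := by field_simp; ring
  have hne : (4-p)/(p-2) + 2 ≠ 0 := by rw [he]; positivity
  have hx2 : x * x = |x| ^ (2:ℝ) := by
    rw [show (2:ℝ) = ((2:ℕ):ℝ) by norm_num, Real.rpow_natCast, sq_abs, sq]
  calc (c * |x| ^ ((4-p)/(p-2)) * x) * x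
      = c * (|x| ^ ((4-p)/(p-2)) * |x| ^ (2:ℝ)) := by rw [← hx2]; ring
    _ = c * |x| ^ ((4-p)/(p-2) + 2) := by rw [Real.rpow_add' (abs_nonneg x) hne]
    _ = c * |x| ^ (p/(p-2)) := by rw [he]

private lemma coord_pow (p : ℝ) (hp : 2 < p) (c x : ℝ) (hc : 0 ≤ c) :
    |c * |x| ^ ((4-p)/(p-2)) * x| ^ (p/2) = c ^ (p/2) * |x| ^ (p/(p-2)) := by
  have h2 : (0:ℝ) < p - 2 := by linarith
  have he : (4-p)/(p-2) + 1 = 2/(p-2) := by field_simp; ring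
  have hne : (4-p)/(p-2) + 1 ≠ 0 := by rw [he]; positivity
  have hmul : |x| ^ ((4-p)/(p-2)) * |x| = |x| ^ (2/(p-2)) := by
    rw [← he, Real.rpow_add' (abs_nonneg x) hne, Real.rpow_one]
  have habs : |c * |x| ^ ((4-p)/(p-2)) * x| = c * |x| ^ (2/(p-2)) := by
    rw [abs_mul, abs_mul, abs_of_nonneg hc, abs_of_nonneg (Real.rpow_nonneg (abs_nonneg x) _),
      mul_assoc, hmul]
  rw [habs, Real.mul_rpow hc (Real.rpow_nonneg (abs_nonneg x) _),
    ← Real.rpow_mul (abs_nonneg x),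
    show 2/(p-2) * (p/2) = p/(p-2) by field_simp]

private lemma witness_val (p a sb tb c : ℝ) (hp : 2 < p) (hc : 0 ≤ c) :
    (c * |sb| ^ ((4-p)/(p-2)) * sb) * sb + (c * |tb| ^ ((4-p)/(p-2)) * tb) * tb
      - (a/p) * (|c * |sb| ^ ((4-p)/(p-2)) * sb|^p
        + 2 * |c * |sb| ^ ((4-p)/(p-2)) * sb|^(p/2) * |c * |tb| ^ ((4-p)/(p-2)) * tb|^(p/2)
        + |c * |tb| ^ ((4-p)/(p-2)) * tb|^p)
    = c * (|sb|^(p/(p-2)) + |tb|^(p/(p-2)))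
      - (a/p) * (c^(p/2) * c^(p/2)) * (|sb|^(p/(p-2)) + |tb|^(p/(p-2)))^2 := by
  have hp0 : (0:ℝ) < p := by linarith
  rw [coord_mul p hp c sb, coord_mul p hp c tb,
    sq_split (c * |sb| ^ ((4-p)/(p-2)) * sb) p hp0,
    sq_split (c * |tb| ^ ((4-p)/(p-2)) * tb) p hp0,
    coord_pow p hp c sb hc, coord_pow p hp c tb hc]
  ring

/-- for `b = 1`, the Legendre transform of
`f(s,t) = (a/p)(|s|^(p/2) + |t|^(p/2))² = (a/p)(|s|^p + 2|s|^(p/2)|t|^(p/2) + |t|^p)` is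
`h(s̄,t̄) = (a^(1-p')/p') (|s̄|^(p/(p-2)) + |t̄|^(p/(p-2)))^((p-2)/(p-1))`. -/
theorem stmt_12 (p p' a : ℝ) (hp : 2 < p) (hp' : p' = p / (p - 1)) (ha : 0 < a)
    (h : ℝ → ℝ → ℝ)
    (hh : ∀ sb tb : ℝ, h sb tb = ⨆ st : ℝ × ℝ,
      (st.1 * sb + st.2 * tb -
        (a / p) * (|st.1| ^ p + 2 * |st.1| ^ (p / 2) * |st.2| ^ (p / 2) + |st.2| ^ p)))
    (sb tb : ℝ) :
    h sb tb =
      (a ^ (1 - p') / p') *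
        (|sb| ^ (p / (p - 2)) + |tb| ^ (p / (p - 2))) ^ ((p - 2) / (p - 1)) := by
  have hp0 : (0:ℝ) < p := by linarith
  have hp1 : (0:ℝ) < p - 1 := by linarith
  have hp2 : (0:ℝ) < p - 2 := by linarith
  have hqs : (0:ℝ) < p/(p-2) := by positivity
  have hee : (0:ℝ) < (p-2)/(p-1) := by positivity
  rw [hh]
  rcases (show (0:ℝ) ≤ |sb|^(p/(p-2)) + |tb|^(p/(p-2)) by positivity).eq_or_lt with hS | hS
  · -- degenerate case: sb = tb = 0
    have h1 : |sb|^(p/(p-2)) = 0 := by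
      nlinarith [Real.rpow_nonneg (abs_nonneg sb) (p/(p-2)),
        Real.rpow_nonneg (abs_nonneg tb) (p/(p-2))]
    have h2 : |tb|^(p/(p-2)) = 0 := by
      nlinarith [Real.rpow_nonneg (abs_nonneg sb) (p/(p-2)),
        Real.rpow_nonneg (abs_nonneg tb) (p/(p-2))]
    have hsb0 : sb = 0 := abs_eq_zero.mp ((Real.rpow_eq_zero (abs_nonneg sb) hqs.ne').mp h1)
    have htb0 : tb = 0 := abs_eq_zero.mp ((Real.rpow_eq_zero (abs_nonneg tb) hqs.ne').mp h2)
    subst hsb0; subst htb0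
    have hRHS : (a^(1-p')/p') * (|(0:ℝ)|^(p/(p-2)) + |(0:ℝ)|^(p/(p-2)))^((p-2)/(p-1)) = 0 := by
      simp [Real.zero_rpow hqs.ne', Real.zero_rpow hee.ne']
    have hub : ∀ st : ℝ × ℝ, st.1 * (0:ℝ) + st.2 * (0:ℝ)
        - (a/p) * (|st.1|^p + 2*|st.1|^(p/2)*|st.2|^(p/2) + |st.2|^p) ≤ 0 := by
      intro st
      have h3 : (0:ℝ) ≤ (a/p) * (|st.1|^p + 2*|st.1|^(p/2)*|st.2|^(p/2) + |st.2|^p) := by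
        positivity
      nlinarith [h3]
    have hbdd : BddAbove (Set.range fun st : ℝ × ℝ => st.1 * (0:ℝ) + st.2 * (0:ℝ)
        - (a/p) * (|st.1|^p + 2*|st.1|^(p/2)*|st.2|^(p/2) + |st.2|^p)) :=
      ⟨0, by rintro y ⟨st, rfl⟩; exact hub st⟩
    refine le_antisymm (le_trans (ciSup_le hub) (le_of_eq hRHS.symm)) ?_
    refine le_trans (le_of_eq hRHS) ?_
    refine le_trans (le_of_eq ?_) (le_ciSup hbdd ((0, 0) : ℝ × ℝ))
    norm_num [Real.zero_rpow hp0.ne', Real.zero_rpow (show (p/2) ≠ 0 by positivity)]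
  · -- main case
    have haS : (0:ℝ) < a * (|sb|^(p/(p-2)) + |tb|^(p/(p-2))) := mul_pos ha hS
    have hk1 := key1 p p' a (|sb|^(p/(p-2)) + |tb|^(p/(p-2))) hp hp' ha hS
    have hub : ∀ st : ℝ × ℝ, st.1 * sb + st.2 * tb
        - (a/p) * (|st.1|^p + 2*|st.1|^(p/2)*|st.2|^(p/2) + |st.2|^p)
        ≤ (a^(1-p')/p') * (|sb|^(p/(p-2)) + |tb|^(p/(p-2)))^((p-2)/(p-1)) := by
      intro st
      exact le_trans
        (upper p a sb tb ((a * (|sb|^(p/(p-2)) + |tb|^(p/(p-2))))^((p-2)/(p*(p-1))))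
          hp ha (Real.rpow_pos_of_pos haS _) st.1 st.2)
        (le_of_eq hk1)
    have hbdd : BddAbove (Set.range fun st : ℝ × ℝ => st.1 * sb + st.2 * tb
        - (a/p) * (|st.1|^p + 2*|st.1|^(p/2)*|st.2|^(p/2) + |st.2|^p)) :=
      ⟨_, by rintro y ⟨st, rfl⟩; exact hub st⟩
    have hc : (0:ℝ) ≤ (a * (|sb|^(p/(p-2)) + |tb|^(p/(p-2))))^(-(1/(p-1))) :=
      (Real.rpow_pos_of_pos haS _).le
    have hwv := witness_val p a sb tb
      ((a * (|sb|^(p/(p-2)) + |tb|^(p/(p-2))))^(-(1/(p-1)))) hp hc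
    have hk2 := key2 p p' a (|sb|^(p/(p-2)) + |tb|^(p/(p-2))) hp hp' ha hS
    refine le_antisymm (ciSup_le hub) ?_
    refine le_trans (le_of_eq (hwv.trans hk2).symm) ?_
    exact le_ciSup hbdd
      (Prod.mk ((a * (|sb|^(p/(p-2)) + |tb|^(p/(p-2))))^(-(1/(p-1))) * |sb|^((4-p)/(p-2)) * sb)
        ((a * (|sb|^(p/(p-2)) + |tb|^(p/(p-2))))^(-(1/(p-1))) * |tb|^((4-p)/(p-2)) * tb))
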